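/- For the unweighted star graph S_m with m edges (m+1 vertices, center adjacent to all leaves) and any 1 ≤ k ≤ (m+1)/2, the largest eigenvalue of the adjacency matrix of the k-th token graph F_k(S_m) equals √(k(m+1-k)). -/

import Mathlib

open Matrix Finset

noncomputable section

/-- Edge weight between vertices `A`, `B` of a token graph: nonzero exactly when the
symmetric difference of `A` and `B` is an edge `{a, b}` of `G` with `a ∈ A`, `b ∈ B`,
in which case it is `w a b`. -/
def tokenW {n : ℕ} (w : Fin n → Fin n → ℝ) (A B : Finset (Fin n)) : ℝ :=
  ∑ a ∈ A \ B, ∑ b ∈ B \ A, if A \ {a} = B \ {b} then w a b else 0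

/-- Vertices of the `k`-th token graph on `[n]`: the `k`-element subsets. -/
abbrev TokenVert (n k : ℕ) := {s : Finset (Fin n) // s.card = k}

/-- Weighted adjacency matrix of the `k`-th token graph `F_k(G)`. -/
def tokenA {n : ℕ} (w : Fin n → Fin n → ℝ) (k : ℕ) :
    Matrix (TokenVert n k) (TokenVert n k) ℝ :=
  Matrix.of fun A B => tokenW w A.1 B.1

/-- Weighted degree matrix of `F_k(G)`. -/
def tokenD {n : ℕ} (w : Fin n → Fin n → ℝ) (k : ℕ) :
    Matrix (TokenVert n k) (TokenVert n k) ℝ :=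
  Matrix.diagonal fun A => ∑ B : TokenVert n k, tokenW w A.1 B.1

/-- Weighted Laplacian of `F_k(G)`. -/
def tokenL {n : ℕ} (w : Fin n → Fin n → ℝ) (k : ℕ) :
    Matrix (TokenVert n k) (TokenVert n k) ℝ :=
  tokenD w k - tokenA w k

/-- Weighted signless Laplacian of `F_k(G)`. -/
def tokenQ {n : ℕ} (w : Fin n → Fin n → ℝ) (k : ℕ) :
    Matrix (TokenVert n k) (TokenVert n k) ℝ :=
  tokenD w k + tokenA w k

/-- Weight function of the unweighted star graph `S_m` on `Fin (m+1)`: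
vertex `0` (the center) is adjacent to all other vertices. -/
def starW (m : ℕ) : Fin (m + 1) → Fin (m + 1) → ℝ :=
  fun i j => if i ≠ j ∧ (i = 0 ∨ j = 0) then 1 else 0

/-- The largest eigenvalue of a real matrix, as the supremum of its real spectrum. -/
def maxEig {ι : Type*} [Fintype ι] [DecidableEq ι] (M : Matrix ι ι ℝ) : ℝ :=
  sSup (spectrum ℝ M)

lemma starW_nonneg (m : ℕ) (i j : Fin (m+1)) : 0 ≤ starW m i j := by
  unfold starW; split <;> norm_num

lemma tokenW_nonneg (m : ℕ) (A B : Finset (Fin (m+1))) : 0 ≤ tokenW (starW m) A B := by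
  refine Finset.sum_nonneg fun a _ => Finset.sum_nonneg fun b _ => ?_
  split
  · exact starW_nonneg m a b
  · exact le_refl 0

lemma tokenW_ne_zero {n : ℕ} {w : Fin n → Fin n → ℝ} {A B : Finset (Fin n)}
    (h : tokenW w A B ≠ 0) :
    ∃ a ∈ A \ B, ∃ b ∈ B \ A, A \ {a} = B \ {b} ∧ w a b ≠ 0 := by
  obtain ⟨a, ha, h⟩ := Finset.exists_ne_zero_of_sum_ne_zero h
  obtain ⟨b, hb, h⟩ := Finset.exists_ne_zero_of_sum_ne_zero h
  by_cases hc : A \ {a} = B \ {b}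
  · exact ⟨a, ha, b, hb, hc, by simpa [hc] using h⟩
  · simp [hc] at h

lemma star_neighbor_left {m : ℕ} {A B : Finset (Fin (m+1))} (h0 : (0:Fin (m+1)) ∈ A)
    (h : tokenW (starW m) A B ≠ 0) :
    ∃ j, j ∉ A ∧ B = insert j (A.erase 0) := by
  obtain ⟨a, ha, b, hb, hab, hw⟩ := tokenW_ne_zero h
  rw [Finset.mem_sdiff] at ha hb
  have hb0 : b ≠ 0 := fun hh => hb.2 (hh ▸ h0)
  have ha0 : a = 0 := by
    by_contra h'
    apply hw
    unfold starW
    rw [if_neg]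
    rintro ⟨-, (h1 | h2)⟩
    · exact h' h1
    · exact hb0 h2
  subst ha0
  rw [Finset.sdiff_singleton_eq_erase, Finset.sdiff_singleton_eq_erase] at hab
  exact ⟨b, hb.2, by rw [hab]; exact (Finset.insert_erase hb.1).symm⟩

lemma star_neighbor_right {m : ℕ} {A B : Finset (Fin (m+1))} (h0 : (0:Fin (m+1)) ∉ A)
    (h : tokenW (starW m) A B ≠ 0) :
    ∃ a, a ∈ A ∧ B = insert 0 (A.erase a) := by
  obtain ⟨a, ha, b, hb, hab, hw⟩ := tokenW_ne_zero h
  rw [Finset.mem_sdiff] at ha hb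
  have ha0 : a ≠ 0 := fun hh => h0 (hh ▸ ha.1)
  have hb0 : b = 0 := by
    by_contra h'
    apply hw
    unfold starW
    rw [if_neg]
    rintro ⟨-, (h1 | h2)⟩
    · exact ha0 h1
    · exact h' h2
  subst hb0
  rw [Finset.sdiff_singleton_eq_erase, Finset.sdiff_singleton_eq_erase] at hab
  exact ⟨a, ha.1, by rw [hab]; exact (Finset.insert_erase hb.1).symm⟩

lemma star_tokenW_left {m : ℕ} {A : Finset (Fin (m+1))} (h0 : (0:Fin (m+1)) ∈ A)
    {j : Fin (m+1)} (hj : j ∉ A) :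
    tokenW (starW m) A (insert j (A.erase 0)) = 1 := by
  have hj0 : j ≠ 0 := fun hh => hj (hh ▸ h0)
  set B := insert j (A.erase 0) with hB
  have hje : j ∉ A.erase 0 := fun hh => hj (Finset.mem_of_mem_erase hh)
  have hAB : A \ B = {0} := by
    ext x
    simp only [hB, Finset.mem_sdiff, Finset.mem_insert, Finset.mem_erase, Finset.mem_singleton]
    constructor
    · rintro ⟨hx, hx2⟩
      by_contra hx0
      exact hx2 (Or.inr ⟨hx0, hx⟩)
    · rintro rfl
      refine ⟨h0, ?_⟩
      rintro (h | ⟨h, -⟩)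
      · exact hj0 h.symm
      · exact h rfl
  have hBA : B \ A = {j} := by
    ext x
    simp only [hB, Finset.mem_sdiff, Finset.mem_insert, Finset.mem_erase, Finset.mem_singleton]
    constructor
    · rintro ⟨h | ⟨-, hx⟩, hxA⟩
      · exact h
      · exact absurd hx hxA
    · rintro rfl
      exact ⟨Or.inl rfl, hj⟩
  have hcond : A \ {(0:Fin (m+1))} = B \ {j} := by
    rw [Finset.sdiff_singleton_eq_erase, Finset.sdiff_singleton_eq_erase, hB,
      Finset.erase_insert hje]
  unfold tokenW
  rw [hAB, hBA, Finset.sum_singleton, Finset.sum_singleton, if_pos hcond]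
  unfold starW
  rw [if_pos ⟨Ne.symm hj0, Or.inl rfl⟩]

lemma star_tokenW_right {m : ℕ} {A : Finset (Fin (m+1))} (h0 : (0:Fin (m+1)) ∉ A)
    {a : Fin (m+1)} (ha : a ∈ A) :
    tokenW (starW m) A (insert 0 (A.erase a)) = 1 := by
  have ha0 : a ≠ 0 := fun hh => h0 (hh ▸ ha)
  set B := insert 0 (A.erase a) with hB
  have h0e : (0:Fin (m+1)) ∉ A.erase a := fun hh => h0 (Finset.mem_of_mem_erase hh)
  have hAB : A \ B = {a} := by
    ext x
    simp only [hB, Finset.mem_sdiff, Finset.mem_insert, Finset.mem_erase, Finset.mem_singleton]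
    constructor
    · rintro ⟨hx, hx2⟩
      by_contra hxa
      exact hx2 (Or.inr ⟨hxa, hx⟩)
    · rintro rfl
      refine ⟨ha, ?_⟩
      rintro (h | ⟨h, -⟩)
      · exact ha0 h
      · exact h rfl
  have hBA : B \ A = {(0:Fin (m+1))} := by
    ext x
    simp only [hB, Finset.mem_sdiff, Finset.mem_insert, Finset.mem_erase, Finset.mem_singleton]
    constructor
    · rintro ⟨h | ⟨-, hx⟩, hxA⟩
      · exact h
      · exact absurd hx hxA
    · rintro rfl
      exact ⟨Or.inl rfl, h0⟩
  have hcond : A \ {a} = B \ {(0:Fin (m+1))} := by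
    rw [Finset.sdiff_singleton_eq_erase, Finset.sdiff_singleton_eq_erase, hB,
      Finset.erase_insert h0e]
  unfold tokenW
  rw [hAB, hBA, Finset.sum_singleton, Finset.sum_singleton, if_pos hcond]
  unfold starW
  rw [if_pos ⟨ha0, Or.inr rfl⟩]

lemma card_insert_erase_left {m : ℕ} {A : Finset (Fin (m+1))} (h0 : (0:Fin (m+1)) ∈ A)
    {j : Fin (m+1)} (hj : j ∉ A) : (insert j (A.erase 0)).card = A.card := by
  have hje : j ∉ A.erase 0 := fun hh => hj (Finset.mem_of_mem_erase hh)
  rw [Finset.card_insert_of_notMem hje, Finset.card_erase_of_mem h0,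
    Nat.sub_add_cancel (Finset.card_pos.mpr ⟨0, h0⟩)]

lemma card_insert_erase_right {m : ℕ} {A : Finset (Fin (m+1))} (h0 : (0:Fin (m+1)) ∉ A)
    {a : Fin (m+1)} (ha : a ∈ A) : (insert 0 (A.erase a)).card = A.card := by
  have h0e : (0:Fin (m+1)) ∉ A.erase a := fun hh => h0 (Finset.mem_of_mem_erase hh)
  rw [Finset.card_insert_of_notMem h0e, Finset.card_erase_of_mem ha,
    Nat.sub_add_cancel (Finset.card_pos.mpr ⟨a, ha⟩)]

def starVec (m k : ℕ) : TokenVert (m+1) k → ℝ :=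
  fun A => if (0:Fin (m+1)) ∈ A.1 then Real.sqrt ((m:ℝ)+1-k) else Real.sqrt k

lemma star_mulVec (m k : ℕ) (hk : 1 ≤ k) (hkm : 2 * k ≤ m + 1) :
    (tokenA (starW m) k).mulVec (starVec m k)
      = Real.sqrt ((k:ℝ) * ((m:ℝ)+1-k)) • starVec m k := by
  have hkm1 : k ≤ m + 1 := le_trans (Nat.le_mul_of_pos_left k (by norm_num)) hkm
  have hkR : (0:ℝ) < k := by exact_mod_cast hk
  have hmkR : (0:ℝ) < (m:ℝ) + 1 - k := by
    have : (k:ℝ) < (m:ℝ) + 1 := by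
      have : (2*k : ℝ) ≤ (m:ℝ) + 1 := by exact_mod_cast hkm
      nlinarith
    linarith
  have hsq : Real.sqrt ((k:ℝ) * ((m:ℝ)+1-k))
      = Real.sqrt k * Real.sqrt ((m:ℝ)+1-k) := Real.sqrt_mul hkR.le _
  funext A
  simp only [Matrix.mulVec, dotProduct, tokenA, Matrix.of_apply, Pi.smul_apply,
    smul_eq_mul, starVec]
  by_cases h0 : (0:Fin (m+1)) ∈ A.1
  · rw [if_pos h0]
    have key : ∑ j ∈ Finset.univ \ A.1, Real.sqrt k
        = ∑ B : TokenVert (m+1) k, tokenW (starW m) A.1 B.1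
            * (if (0:Fin (m+1)) ∈ B.1 then Real.sqrt ((m:ℝ)+1-k) else Real.sqrt k) := by
      refine Finset.sum_bij_ne_zero
        (i := fun j hj _ => (⟨insert j (A.1.erase 0),
          by rw [card_insert_erase_left h0 (Finset.mem_sdiff.mp hj).2, A.2]⟩ : TokenVert (m+1) k))
        (fun _ _ _ => Finset.mem_univ _) ?_ ?_ ?_
      · intro j₁ h₁₁ h₁₂ j₂ h₂₁ h₂₂ heq
        have heq' : insert j₁ (A.1.erase 0) = insert j₂ (A.1.erase 0) :=
          congrArg Subtype.val heq
        have : j₁ ∈ insert j₂ (A.1.erase 0) := heq' ▸ Finset.mem_insert_self _ _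
        rcases Finset.mem_insert.mp this with h | h
        · exact h
        · exact absurd (Finset.mem_of_mem_erase h) (Finset.mem_sdiff.mp h₁₁).2
      · intro B _ hB
        have htw : tokenW (starW m) A.1 B.1 ≠ 0 := fun hh => hB (by rw [hh, zero_mul])
        obtain ⟨j, hj, hBj⟩ := star_neighbor_left h0 htw
        refine ⟨j, Finset.mem_sdiff.mpr ⟨Finset.mem_univ _, hj⟩,
          ne_of_gt (Real.sqrt_pos.mpr hkR), ?_⟩
        exact Subtype.ext hBj.symm
      · intro j hj _
        have hjA : j ∉ A.1 := (Finset.mem_sdiff.mp hj).2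
        have hj0 : j ≠ 0 := fun hh => hjA (hh ▸ h0)
        have h0B : (0:Fin (m+1)) ∉ insert j (A.1.erase 0) := by
          simp [Finset.mem_insert, Finset.mem_erase, hj0.symm]
        rw [star_tokenW_left h0 hjA, one_mul, if_neg h0B]
    rw [← key, Finset.sum_const, Finset.card_sdiff_of_subset (Finset.subset_univ _),
      Finset.card_univ, Fintype.card_fin, A.2, nsmul_eq_mul, hsq,
      Nat.cast_sub hkm1]
    have h1 : Real.sqrt ((m:ℝ)+1-(k:ℝ)) * Real.sqrt ((m:ℝ)+1-(k:ℝ)) = (m:ℝ)+1-(k:ℝ) :=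
      Real.mul_self_sqrt hmkR.le
    push_cast
    linear_combination (-Real.sqrt (k:ℝ)) * h1
  · rw [if_neg h0]
    have key : ∑ a ∈ A.1, Real.sqrt ((m:ℝ)+1-k)
        = ∑ B : TokenVert (m+1) k, tokenW (starW m) A.1 B.1
            * (if (0:Fin (m+1)) ∈ B.1 then Real.sqrt ((m:ℝ)+1-k) else Real.sqrt k) := by
      refine Finset.sum_bij_ne_zero
        (i := fun a ha _ => (⟨insert 0 (A.1.erase a),
          by rw [card_insert_erase_right h0 ha, A.2]⟩ : TokenVert (m+1) k))
        (fun _ _ _ => Finset.mem_univ _) ?_ ?_ ?_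
      · intro a₁ h₁₁ h₁₂ a₂ h₂₁ h₂₂ heq
        have heq' : insert 0 (A.1.erase a₁) = insert 0 (A.1.erase a₂) :=
          congrArg Subtype.val heq
        by_contra hne
        have hmem : a₂ ∈ insert 0 (A.1.erase a₁) :=
          Finset.mem_insert.mpr (Or.inr (Finset.mem_erase.mpr ⟨fun hh => hne hh.symm, h₂₁⟩))
        rw [heq'] at hmem
        rcases Finset.mem_insert.mp hmem with h | h
        · exact h0 (h ▸ h₂₁)
        · exact (Finset.mem_erase.mp h).1 rfl
      · intro B _ hB
        have htw : tokenW (starW m) A.1 B.1 ≠ 0 := fun hh => hB (by rw [hh, zero_mul])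
        obtain ⟨a, ha, hBa⟩ := star_neighbor_right h0 htw
        refine ⟨a, ha, ne_of_gt (Real.sqrt_pos.mpr hmkR), Subtype.ext hBa.symm⟩
      · intro a ha _
        have h0B : (0:Fin (m+1)) ∈ insert 0 (A.1.erase a) := Finset.mem_insert_self _ _
        rw [star_tokenW_right h0 ha, one_mul, if_pos h0B]
    rw [← key, Finset.sum_const, A.2, nsmul_eq_mul, hsq]
    have h2 : Real.sqrt (k:ℝ) * Real.sqrt (k:ℝ) = (k:ℝ) := Real.mul_self_sqrt hkR.le
    linear_combination (-Real.sqrt ((m:ℝ)+1-(k:ℝ))) * h2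

lemma mem_spectrum_of_eigvec {ι : Type*} [Fintype ι] [DecidableEq ι]
    {M : Matrix ι ι ℝ} {μ : ℝ} {v : ι → ℝ} (hv : v ≠ 0) (h : M.mulVec v = μ • v) :
    μ ∈ spectrum ℝ M := by
  rw [spectrum.mem_iff]
  intro hU
  have halg : (algebraMap ℝ (Matrix ι ι ℝ) μ) = μ • (1 : Matrix ι ι ℝ) :=
    Algebra.algebraMap_eq_smul_one μ
  have h2 : (algebraMap ℝ (Matrix ι ι ℝ) μ - M).mulVec v = 0 := by
    rw [Matrix.sub_mulVec, h, halg, Matrix.smul_mulVec, Matrix.one_mulVec, sub_self]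
  have hinj := Matrix.mulVec_injective_iff_isUnit.mpr hU
  apply hv
  apply hinj
  rw [h2, Matrix.mulVec_zero]

lemma eigvec_of_mem_spectrum {ι : Type*} [Fintype ι] [DecidableEq ι]
    {M : Matrix ι ι ℝ} {μ : ℝ} (h : μ ∈ spectrum ℝ M) :
    ∃ v ≠ 0, M.mulVec v = μ • v := by
  rw [spectrum.mem_iff] at h
  have hdet : (algebraMap ℝ (Matrix ι ι ℝ) μ - M).det = 0 := by
    by_contra hne
    exact h ((Matrix.isUnit_iff_isUnit_det _).mpr (isUnit_iff_ne_zero.mpr hne))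
  obtain ⟨v, hv, hv0⟩ := Matrix.exists_mulVec_eq_zero_iff.mpr hdet
  refine ⟨v, hv, ?_⟩
  have halg : (algebraMap ℝ (Matrix ι ι ℝ) μ) = μ • (1 : Matrix ι ι ℝ) :=
    Algebra.algebraMap_eq_smul_one μ
  rw [Matrix.sub_mulVec, halg, Matrix.smul_mulVec, Matrix.one_mulVec, sub_eq_zero] at hv0
  exact hv0.symm

lemma spectrum_le_of_pos_eigvec {ι : Type*} [Fintype ι] [DecidableEq ι] [Nonempty ι]
    {M : Matrix ι ι ℝ} {v : ι → ℝ} {lam : ℝ}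
    (hM : ∀ i j, 0 ≤ M i j) (hv : ∀ i, 0 < v i) (hMv : M.mulVec v = lam • v)
    {μ : ℝ} (hμ : μ ∈ spectrum ℝ M) : μ ≤ lam := by
  obtain ⟨x, hx, hMx⟩ := eigvec_of_mem_spectrum hμ
  obtain ⟨i0, -, hi0⟩ := Finset.exists_max_image Finset.univ (fun i => |x i| / v i)
    ⟨Classical.arbitrary ι, Finset.mem_univ _⟩
  set c := |x i0| / v i0 with hc
  have hkey : ∀ i, |x i| ≤ c * v i := fun i => (div_le_iff₀ (hv i)).mp (hi0 i (Finset.mem_univ i))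
  have hxi0 : |x i0| = c * v i0 := (div_mul_cancel₀ _ (hv i0).ne').symm
  have hcpos : 0 < c := by
    obtain ⟨j, hj⟩ := Function.ne_iff.mp hx
    have h1 : 0 < |x j| := abs_pos.mpr hj
    have h2 : 0 < |x j| / v j := div_pos h1 (hv j)
    exact lt_of_lt_of_le h2 (hi0 j (Finset.mem_univ j))
  have hxi0pos : 0 < |x i0| := hxi0 ▸ mul_pos hcpos (hv i0)
  have hmain : |μ| * |x i0| ≤ lam * |x i0| := by
    have h1 : μ * x i0 = ∑ j, M i0 j * x j := by
      have := congrFun hMx i0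
      simp only [Matrix.mulVec, dotProduct, Pi.smul_apply, smul_eq_mul] at this
      exact this.symm
    calc |μ| * |x i0| = |μ * x i0| := (abs_mul μ (x i0)).symm
      _ = |∑ j, M i0 j * x j| := by rw [h1]
      _ ≤ ∑ j, |M i0 j * x j| := Finset.abs_sum_le_sum_abs _ _
      _ = ∑ j, M i0 j * |x j| := by
          refine Finset.sum_congr rfl fun j _ => ?_
          rw [abs_mul, abs_of_nonneg (hM i0 j)]
      _ ≤ ∑ j, M i0 j * (c * v j) := by
          refine Finset.sum_le_sum fun j _ => mul_le_mul_of_nonneg_left (hkey j) (hM i0 j)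
      _ = c * ∑ j, M i0 j * v j := by rw [Finset.mul_sum]; exact Finset.sum_congr rfl fun j _ => by ring
      _ = c * (lam * v i0) := by
          have := congrFun hMv i0
          simp only [Matrix.mulVec, dotProduct, Pi.smul_apply, smul_eq_mul] at this
          rw [this]
      _ = lam * (c * v i0) := by ring
      _ = lam * |x i0| := by rw [hxi0]
  have habs : |μ| ≤ lam := le_of_mul_le_mul_right hmain hxi0pos
  exact le_trans (le_abs_self μ) habs

set_option maxHeartbeats 1600000 in
/-- For the star `S_m` and `1 ≤ k ≤ (m+1)/2`, the largest adjacency eigenvalue of the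
token graph `F_k(S_m)` equals `√(k (m + 1 - k))`. -/
theorem star_tokenA_maxEig (m k : ℕ) (hm : 1 ≤ m) (hk : 1 ≤ k) (hkm : 2 * k ≤ m + 1) :
    maxEig (tokenA (starW m) k) = Real.sqrt ((k : ℝ) * ((m : ℝ) + 1 - (k : ℝ))) := by
  have hkm1 : k ≤ m + 1 := le_trans (Nat.le_mul_of_pos_left k (by norm_num)) hkm
  have hkR : (0:ℝ) < k := by exact_mod_cast hk
  have hmkR : (0:ℝ) < (m:ℝ) + 1 - k := by
    have h2 : (2*k : ℝ) ≤ (m:ℝ) + 1 := by exact_mod_cast hkm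
    nlinarith
  haveI hne : Nonempty (TokenVert (m+1) k) := by
    obtain ⟨t, -, ht⟩ := Finset.exists_subset_card_eq (s := (Finset.univ : Finset (Fin (m+1)))) (n := k)
      (by rw [Finset.card_univ, Fintype.card_fin]; exact hkm1)
    exact ⟨⟨t, ht⟩⟩
  have hvpos : ∀ A : TokenVert (m+1) k, 0 < starVec m k A := by
    intro A
    unfold starVec
    split
    · exact Real.sqrt_pos.mpr hmkR
    · exact Real.sqrt_pos.mpr hkR
  have hMv := star_mulVec m k hk hkm
  have hvne : starVec m k ≠ 0 := by
    intro hh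
    have := hvpos (Classical.arbitrary _)
    rw [hh] at this
    exact lt_irrefl 0 this
  have hmem : Real.sqrt ((k : ℝ) * ((m : ℝ) + 1 - (k : ℝ))) ∈ spectrum ℝ (tokenA (starW m) k) :=
    mem_spectrum_of_eigvec hvne hMv
  have hub : ∀ μ ∈ spectrum ℝ (tokenA (starW m) k),
      μ ≤ Real.sqrt ((k : ℝ) * ((m : ℝ) + 1 - (k : ℝ))) := by
    intro μ hμ
    refine spectrum_le_of_pos_eigvec (M := tokenA (starW m) k) (v := starVec m k) ?_ hvpos hMv hμ
    intro A B
    exact tokenW_nonneg m A.1 B.1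
  unfold maxEig
  exact le_antisymm (csSup_le ⟨_, hmem⟩ hub) (le_csSup ⟨_, hub⟩ hmem)
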